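/- arXiv:2007.10989 — 3 statements merged into one kernel-verified Lean document; each statement's English description precedes it below -/
import Mathlib

section
/- Let (A, φ) be a *-probability space with free cumulants (κ_n), and let (A_i)_{i∈I} be unital *-subalgebras of A that are freely independent in the cumulant sense. Let a = a_1 ⋯ a_k and b = b_1 ⋯ b_ℓ, where a_u ∈ A_{i_u} with φ(a_u) = 0 and i_u ≠ i_{u+1} for all u, and b_v ∈ A_{j_v} with φ(b_v) = 0 and j_v ≠ j_{v+1} for all v. If it is not the case that k = ℓ and i_u = j_u for all 1 ≤ u ≤ k, then κ_2(a*, b) = 0. -/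
open scoped BigOperators ComplexOrder

/-- A partition of `{0, …, n-1}` is non-crossing if whenever `p < q < r < s`,
`p, r` lie in a block `B` and `q, s` lie in a block `C`, then `B = C`. -/
def IsNonCrossing {n : ℕ} (π : Finpartition (Finset.univ : Finset (Fin n))) : Prop :=
  ∀ (p q r s : Fin n), p < q → q < r → r < s →
    ∀ B ∈ π.parts, ∀ C ∈ π.parts, p ∈ B → r ∈ B → q ∈ C → s ∈ C → B = C

lemma isNonCrossing_of_le_three {n : ℕ} (hn : n ≤ 3)
    (π : Finpartition (Finset.univ : Finset (Fin n))) : IsNonCrossing π := by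
  intro p q r s hpq hqr hrs B _ C _ _ _ _ _
  exfalso
  have h1 : (p : ℕ) < q := hpq
  have h2 : (q : ℕ) < r := hqr
  have h3 : (r : ℕ) < s := hrs
  have := s.isLt
  omega

-- classification n = 1
lemma parts_fin_one (π : Finpartition (Finset.univ : Finset (Fin 1))) :
    π.parts = {Finset.univ} := by
  have hne : π.parts.Nonempty := π.parts_nonempty (by decide)
  apply Finset.Subset.antisymm
  · intro V hV
    rw [Finset.mem_singleton]
    have h1 : V.Nonempty := π.nonempty_of_mem_parts hV
    apply Finset.eq_univ_of_card
    have hp := h1.card_pos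
    have hle := Finset.card_le_univ V
    simp only [Finset.card_univ, Fintype.card_fin] at *
    omega
  · intro V hV
    rw [Finset.mem_singleton] at hV
    subst hV
    obtain ⟨W, hW⟩ := hne
    have : W = Finset.univ := by
      apply Finset.eq_univ_of_card
      have h1 : W.Nonempty := π.nonempty_of_mem_parts hW
      have hp := h1.card_pos
      have hle := Finset.card_le_univ W
      simp only [Finset.card_univ, Fintype.card_fin] at *
      omega
    rwa [this] at hW

noncomputable def nc2top : Finpartition (Finset.univ : Finset (Fin 2)) :=
  Finpartition.indiscrete (by decide)

def nc2bot : Finpartition (Finset.univ : Finset (Fin 2)) where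
  parts := {{0}, {1}}
  supIndep := by decide
  sup_parts := by decide
  bot_notMem := by decide

lemma fin2_subsets : ∀ V : Finset (Fin 2), V.Nonempty → V ≠ Finset.univ →
    V = {0} ∨ V = {1} := by decide

lemma parts_fin_two (π : Finpartition (Finset.univ : Finset (Fin 2))) :
    π = nc2top ∨ π = nc2bot := by
  by_cases h : Finset.univ ∈ π.parts
  · left
    apply Finpartition.ext
    apply Finset.ext
    intro V
    show V ∈ π.parts ↔ V ∈ ({Finset.univ} : Finset (Finset (Fin 2)))
    constructor
    · intro hV
      rw [Finset.mem_singleton]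
      obtain ⟨x, hx⟩ := π.nonempty_of_mem_parts hV
      exact π.eq_of_mem_parts hV h hx (Finset.mem_univ x)
    · intro hV; rw [Finset.mem_singleton] at hV; subst hV; exact h
  · right
    have hcl : ∀ V ∈ π.parts, V = {0} ∨ V = {1} := by
      intro V hV
      have h1 : V.Nonempty := π.nonempty_of_mem_parts hV
      have h2 : V ≠ Finset.univ := fun he => h (he ▸ hV)
      exact fin2_subsets V h1 h2
    have h0 : ({0} : Finset (Fin 2)) ∈ π.parts := by
      obtain ⟨V, hV, h0V⟩ := π.exists_mem (Finset.mem_univ (0 : Fin 2))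
      rcases hcl V hV with rfl | rfl
      · exact hV
      · simp at h0V
    have h1 : ({1} : Finset (Fin 2)) ∈ π.parts := by
      obtain ⟨V, hV, h1V⟩ := π.exists_mem (Finset.mem_univ (1 : Fin 2))
      rcases hcl V hV with rfl | rfl
      · simp at h1V
      · exact hV
    apply Finpartition.ext
    apply Finset.ext
    intro V
    show V ∈ π.parts ↔ V ∈ ({{0}, {1}} : Finset (Finset (Fin 2)))
    constructor
    · intro hV
      rcases hcl V hV with rfl | rfl <;> simp
    · intro hV
      rcases Finset.mem_insert.mp hV with rfl | hV
      · exact h0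
      · rw [Finset.mem_singleton] at hV; subst hV; exact h1

lemma nc2top_ne_bot : nc2top ≠ nc2bot := by
  intro h
  have h1 : Finset.univ ∈ nc2top.parts := by
    show _ ∈ ({Finset.univ} : Finset (Finset (Fin 2)))
    simp
  rw [h] at h1
  have : Finset.univ ∈ ({{0}, {1}} : Finset (Finset (Fin 2))) := h1
  revert this
  decide

/-- The multiplicative extension `κ_π[a_1, …, a_n] = ∏_{V ∈ π} κ_{|V|}(a_{i_1}, …, a_{i_s})`
of a family of multilinear functionals `κ_n : A^n → ℂ`, where each block
`V = {i_1 < ⋯ < i_s}` is listed in increasing order. -/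
noncomputable def partCum {A : Type*} [Ring A] [Algebra ℂ A]
    (κ : ∀ n, MultilinearMap ℂ (fun _ : Fin n => A) ℂ)
    {n : ℕ} (π : Finpartition (Finset.univ : Finset (Fin n))) (a : Fin n → A) : ℂ :=
  ∏ V ∈ π.parts, κ (V.sort (· ≤ ·)).length (fun j => a ((V.sort (· ≤ ·)).get j))

open Classical in
/-- The moment–cumulant relation: `φ(a_1 ⋯ a_n) = Σ_{π ∈ NC(n)} κ_π[a_1, …, a_n]`
for all `n ≥ 1`; it characterizes the free cumulants of `(A, φ)`. -/
def MomentCumulant {A : Type*} [Ring A] [Algebra ℂ A] (φ : A →ₗ[ℂ] ℂ)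
    (κ : ∀ n, MultilinearMap ℂ (fun _ : Fin n => A) ℂ) : Prop :=
  ∀ (n : ℕ), 0 < n → ∀ a : Fin n → A,
    φ (List.ofFn a).prod =
      ∑ π ∈ Finset.univ.filter
          (fun π : Finpartition (Finset.univ : Finset (Fin n)) => IsNonCrossing π),
        partCum κ π a

section

variable {A : Type*} [Ring A] [Algebra ℂ A]
variable (φ : A →ₗ[ℂ] ℂ) (κ : ∀ n, MultilinearMap ℂ (fun _ : Fin n => A) ℂ)

open Classical in
lemma kappa_one (hκ : MomentCumulant φ κ) (x : A) : κ 1 (fun _ => x) = φ x := by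
  have h := hκ 1 one_pos (fun _ => x)
  have hofn : (List.ofFn (fun _ : Fin 1 => x)).prod = x := by
    simp [List.ofFn_succ]
  rw [hofn] at h
  have huniv : (Finset.univ : Finset (Finpartition (Finset.univ : Finset (Fin 1)))).filter
      (fun π => IsNonCrossing π) = {Finpartition.indiscrete (by decide : (Finset.univ : Finset (Fin 1)) ≠ ⊥)} := by
    apply Finset.ext
    intro π
    simp only [Finset.mem_filter, Finset.mem_univ, true_and, Finset.mem_singleton]
    constructor
    · intro _
      apply Finpartition.ext
      rw [parts_fin_one π]
      rfl
    · intro _; exact isNonCrossing_of_le_three (by norm_num) π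
  rw [huniv, Finset.sum_singleton] at h
  unfold partCum at h
  have hparts : (Finpartition.indiscrete (by decide : (Finset.univ : Finset (Fin 1)) ≠ ⊥)).parts
      = {(Finset.univ : Finset (Fin 1))} := rfl
  rw [hparts, Finset.prod_singleton] at h
  have hsort : (Finset.univ : Finset (Fin 1)).sort (· ≤ ·) = [0] := by
    rw [(by decide : (Finset.univ : Finset (Fin 1)) = {0}), Finset.sort_singleton]
  rw [hsort] at h
  exact h.symm

open Classical in
lemma kappa_two (hκ : MomentCumulant φ κ) (x y : A) :
    κ 2 ![x, y] = φ (x * y) - φ x * φ y := by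
  have h := hκ 2 (by norm_num) ![x, y]
  have hofn : (List.ofFn ![x, y]).prod = x * y := by
    simp [List.ofFn_succ]
  rw [hofn] at h
  have huniv : (Finset.univ : Finset (Finpartition (Finset.univ : Finset (Fin 2)))).filter
      (fun π => IsNonCrossing π) = {nc2top, nc2bot} := by
    apply Finset.ext
    intro π
    simp only [Finset.mem_filter, Finset.mem_univ, true_and, Finset.mem_insert,
      Finset.mem_singleton]
    constructor
    · intro _; exact parts_fin_two π
    · intro _; exact isNonCrossing_of_le_three (by norm_num) π
  rw [huniv, Finset.sum_pair nc2top_ne_bot] at h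
  unfold partCum at h
  have htop : nc2top.parts = {(Finset.univ : Finset (Fin 2))} := rfl
  have hbot : nc2bot.parts = {{0}, {1}} := rfl
  rw [htop, hbot, Finset.prod_singleton,
    Finset.prod_pair (by decide : ({0} : Finset (Fin 2)) ≠ {1})] at h
  have hsort : (Finset.univ : Finset (Fin 2)).sort (· ≤ ·) = [0, 1] := by
    have hperm : List.Perm ((Finset.univ : Finset (Fin 2)).sort (· ≤ ·)) [0, 1] :=
      List.perm_of_nodup_nodup_toFinset_eq (Finset.sort_nodup _ _) (by decide)
        (by rw [Finset.sort_toFinset]; decide)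
    exact List.Perm.eq_of_pairwise' (Finset.pairwise_sort ..) (by decide) hperm
  rw [hsort, Finset.sort_singleton, Finset.sort_singleton] at h
  have e1 : (fun j : Fin ([(0 : Fin 2), 1].length) => ![x, y] ([(0 : Fin 2), 1].get j))
      = ![x, y] := by
    funext j; fin_cases j <;> rfl
  have e2 : (fun j : Fin ([(0 : Fin 2)].length) => ![x, y] ([(0 : Fin 2)].get j))
      = (fun _ : Fin 1 => x) := by funext j; fin_cases j; rfl
  have e3 : (fun j : Fin ([(1 : Fin 2)].length) => ![x, y] ([(1 : Fin 2)].get j))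
      = (fun _ : Fin 1 => y) := by funext j; fin_cases j; rfl
  rw [e1, e2, e3] at h
  have h' : φ (x * y) = κ 2 ![x, y] + (κ 1 fun _ : Fin 1 => x) * (κ 1 fun _ : Fin 1 => y) := h
  rw [kappa_one φ κ hκ, kappa_one φ κ hκ] at h'
  rw [h']; ring

end

section
variable {A : Type*} [Ring A] [Algebra ℂ A] [StarRing A] [StarModule ℂ A]
variable (φ : A →ₗ[ℂ] ℂ)

lemma phi_star_eq (hφ1 : φ 1 = 1) (hpos : ∀ x : A, 0 ≤ φ (star x * x)) (y : A) :
    φ (star y) = (starRingEnd ℂ) (φ y) := by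
  have him : ∀ z : A, (φ (star z * z)).im = 0 := by
    intro z
    have h := hpos z
    rw [Complex.le_def] at h
    simpa using h.2.symm
  have e1 : star (1 + y) * (1 + y) = (1 + y) + (star y + star y * y) := by
    rw [star_add, star_one, add_mul, one_mul, mul_add, mul_one, add_assoc]
  have h1 := him (1 + y)
  rw [e1, map_add, map_add, map_add, hφ1] at h1
  simp only [Complex.add_im, Complex.one_im, him y, add_zero, zero_add] at h1
  -- h1 : (φ y).im + (φ (star y)).im = 0
  have e2 : star (1 + Complex.I • y) * (1 + Complex.I • y)
      = (1 + Complex.I • y) + ((-Complex.I) • star y + star y * y) := by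
    rw [star_add, star_one, star_smul]
    rw [add_mul, one_mul, mul_add, mul_one, smul_mul_smul_comm]
    have hsI : star Complex.I = -Complex.I := by
      rw [Complex.star_def, Complex.conj_I]
    have hII : -Complex.I * Complex.I = 1 := by
      simp [Complex.I_mul_I]
    rw [hsI, hII, one_smul, add_assoc]
  have h2 := him (1 + Complex.I • y)
  rw [e2, map_add, map_add, map_add, map_smul, map_smul, hφ1] at h2
  simp only [Complex.add_im, Complex.one_im, him y, add_zero, zero_add, smul_eq_mul,
    Complex.mul_im, Complex.I_re, Complex.I_im, Complex.neg_re, Complex.neg_im,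
    zero_mul, one_mul, neg_zero, neg_mul] at h2
  -- h2 relates re parts
  apply Complex.ext
  · simp only [Complex.conj_re]
    nlinarith [h2]
  · simp only [Complex.conj_im]
    linarith [h1]

end

open Classical in
lemma exists_adjacent {n : ℕ} (hn : 0 < n)
    (π : Finpartition (Finset.univ : Finset (Fin n))) (hnc : IsNonCrossing π)
    (h2 : ∀ V ∈ π.parts, 2 ≤ V.card) :
    ∃ V ∈ π.parts, ∃ p q : Fin n, p ∈ V ∧ q ∈ V ∧ (p : ℕ) + 1 = (q : ℕ) := by
  set T : Finset (Fin n × Fin n) :=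
    Finset.univ.filter (fun pr => pr.1 < pr.2 ∧ ∃ V ∈ π.parts, pr.1 ∈ V ∧ pr.2 ∈ V) with hT
  have hTne : T.Nonempty := by
    obtain ⟨V, hV, h0V⟩ := π.exists_mem (Finset.mem_univ (⟨0, hn⟩ : Fin n))
    have hcard : 1 < V.card := by have := h2 V hV; omega
    obtain ⟨y, hyV, hyne⟩ := Finset.exists_mem_ne hcard ⟨0, hn⟩
    rcases lt_or_gt_of_ne hyne with hlt | hgt
    · exact ⟨(y, ⟨0, hn⟩), Finset.mem_filter.mpr ⟨Finset.mem_univ _, hlt, V, hV, hyV, h0V⟩⟩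
    · exact ⟨(⟨0, hn⟩, y), Finset.mem_filter.mpr ⟨Finset.mem_univ _, hgt, V, hV, h0V, hyV⟩⟩
  obtain ⟨pr, hprT, hmin⟩ := T.exists_min_image (fun pr => (pr.2 : ℕ) - (pr.1 : ℕ)) hTne
  obtain ⟨-, hlt, B, hB, hpB, hrB⟩ := Finset.mem_filter.mp hprT
  set p := pr.1
  set r := pr.2
  by_cases hadj : (p : ℕ) + 1 = (r : ℕ)
  · exact ⟨B, hB, p, r, hpB, hrB, hadj⟩
  exfalso
  have hplt : (p : ℕ) < (r : ℕ) := hlt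
  have hq : (p : ℕ) + 1 < n := by have := r.isLt; omega
  set q : Fin n := ⟨(p : ℕ) + 1, hq⟩
  obtain ⟨C, hC, hqC⟩ := π.exists_mem (Finset.mem_univ q)
  by_cases hBC : C = B
  · subst hBC
    have hmem : (p, q) ∈ T :=
      Finset.mem_filter.mpr ⟨Finset.mem_univ _, by simp [q, Fin.lt_def], C, hC, hpB, hqC⟩
    have := hmin _ hmem
    simp only [q] at this
    omega
  · have hcard : 1 < C.card := by have := h2 C hC; omega
    obtain ⟨s, hsC, hsne⟩ := Finset.exists_mem_ne hcard q
    have hsq : (s : ℕ) ≠ (q : ℕ) := fun h => hsne (Fin.ext h)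
    rcases lt_trichotomy (s : ℕ) (q : ℕ) with hlt1 | heq1 | hgt1
    · -- s ≤ p
      have hsp : (s : ℕ) ≤ (p : ℕ) := by simp only [q] at hlt1; omega
      rcases eq_or_lt_of_le hsp with heq | hslt
      · -- s = p : p in both B and C
        have : s = p := Fin.ext heq
        subst this
        exact hBC (π.eq_of_mem_parts hC hB hsC hpB)
      · -- s < p < q < r : crossing
        have hq_lt_r : q < r := by simp only [Fin.lt_def, q]; omega
        have hs_lt_p : s < p := hslt
        have hp_lt_q : p < q := by simp only [Fin.lt_def, q]; omega
        exact hBC (hnc s p q r hs_lt_p hp_lt_q hq_lt_r C hC B hB hsC hqC hpB hrB)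
    · exact hsq heq1
    · rcases lt_trichotomy (s : ℕ) (r : ℕ) with hlt2 | heq2 | hgt2
      · -- q < s < r : smaller gap pair (q, s)
        have hmem : (q, s) ∈ T :=
          Finset.mem_filter.mpr ⟨Finset.mem_univ _, Fin.lt_def.mpr hgt1, C, hC, hqC, hsC⟩
        have := hmin _ hmem
        simp only [q] at this
        omega
      · -- s = r in both
        have : s = r := Fin.ext heq2
        subst this
        exact hBC (π.eq_of_mem_parts hC hB hsC hrB)
      · -- p < q < r < s : crossing
        have hp_lt_q : p < q := by simp only [Fin.lt_def, q]; omega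
        have hq_lt_r : q < r := by simp only [Fin.lt_def, q]; omega
        have hr_lt_s : r < s := hgt2
        exact hBC ((hnc p q r s hp_lt_q hq_lt_r hr_lt_s B hB C hC hpB hrB hqC hsC).symm)

/-- Free independence, in the cumulant sense, of a family of subsets `S i` of `A`:
all mixed free cumulants vanish. -/
def FreeIndepCumulant {A : Type*} [Ring A] [Algebra ℂ A] {ι : Type*}
    (S : ι → Set A)
    (κ : ∀ n, MultilinearMap ℂ (fun _ : Fin n => A) ℂ) : Prop :=
  ∀ (n : ℕ), 2 ≤ n → ∀ (a : Fin n → A) (idx : Fin n → ι),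
    (∀ j, a j ∈ S (idx j)) → (∃ j j' : Fin n, idx j ≠ idx j') →
    κ n a = 0

section Main
variable {A : Type*} [Ring A] [Algebra ℂ A] [StarRing A] [StarModule ℂ A] {ι : Type*}
variable (φ : A →ₗ[ℂ] ℂ) (κ : ∀ n, MultilinearMap ℂ (fun _ : Fin n => A) ℂ)
variable (Alg : ι → StarSubalgebra ℂ A)

open Classical in
lemma phi_alt (hκ : MomentCumulant φ κ)
    (hfree : FreeIndepCumulant (fun i' => (Alg i' : Set A)) κ)
    {n : ℕ} (hn : 0 < n) (c : Fin n → A) (idx : Fin n → ι)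
    (hmem : ∀ u, c u ∈ Alg (idx u)) (hcent : ∀ u, φ (c u) = 0)
    (halt : ∀ u u' : Fin n, (u : ℕ) + 1 = (u' : ℕ) → idx u ≠ idx u') :
    φ (List.ofFn c).prod = 0 := by
  rw [hκ n hn c]
  apply Finset.sum_eq_zero
  intro π hπ
  have hnc : IsNonCrossing π := (Finset.mem_filter.mp hπ).2
  unfold partCum
  by_cases hsing : ∃ V ∈ π.parts, V.card = 1
  · obtain ⟨V, hV, hc1⟩ := hsing
    obtain ⟨p, rfl⟩ := Finset.card_eq_one.mp hc1
    apply Finset.prod_eq_zero hV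
    rw [Finset.sort_singleton]
    have e : (fun j : Fin ([p].length) => c ([p].get j)) = (fun _ : Fin 1 => c p) := by
      funext j; fin_cases j; rfl
    rw [e]
    show κ 1 (fun _ : Fin 1 => c p) = 0
    rw [kappa_one φ κ hκ]
    exact hcent p
  · push_neg at hsing
    have h2 : ∀ V ∈ π.parts, 2 ≤ V.card := by
      intro V hV
      have h1 := (π.nonempty_of_mem_parts hV).card_pos
      have := hsing V hV
      omega
    obtain ⟨V, hV, p, q, hpV, hqV, hpq⟩ := exists_adjacent hn π hnc h2
    apply Finset.prod_eq_zero hV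
    apply hfree _ (by rw [Finset.length_sort]; exact h2 V hV) _
      (fun j => idx ((V.sort (· ≤ ·)).get j))
    · intro j; exact hmem _
    · have hp' : p ∈ V.sort (· ≤ ·) := (Finset.mem_sort _).mpr hpV
      have hq' : q ∈ V.sort (· ≤ ·) := (Finset.mem_sort _).mpr hqV
      obtain ⟨jp, hjp⟩ := List.get_of_mem hp'
      obtain ⟨jq, hjq⟩ := List.get_of_mem hq'
      exact ⟨jp, jq, by rw [hjp, hjq]; exact halt p q hpq⟩

lemma phi_word (hκ : MomentCumulant φ κ)
    (hfree : FreeIndepCumulant (fun i' => (Alg i' : Set A)) κ)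
    (L : List (A × ι)) (hL : L ≠ [])
    (hmem : ∀ p ∈ L, p.1 ∈ Alg p.2) (hcent : ∀ p ∈ L, φ p.1 = 0)
    (hch : L.Chain' (fun p q => p.2 ≠ q.2)) :
    φ (L.map Prod.fst).prod = 0 := by
  have hn : 0 < L.length := List.length_pos_iff.mpr hL
  have hprod : L.map Prod.fst = List.ofFn (fun u : Fin L.length => (L.get u).1) := by
    conv_lhs => rw [← List.ofFn_get L]
    rw [List.map_ofFn]
    rfl
  rw [hprod]
  apply phi_alt φ κ Alg hκ hfree hn _ (fun u => (L.get u).2)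
  · intro u; exact hmem _ (L.get_mem _)
  · intro u; exact hcent _ (L.get_mem _)
  · intro u u' huu
    have hch' := List.isChain_iff_getElem.mp hch (u : ℕ) (by have := u'.isLt; omega)
    obtain ⟨u', hu'⟩ := u'
    simp only at huu
    subst huu
    simp only [List.get_eq_getElem]
    exact hch'

end Main

lemma star_list_prod {A : Type*} [Ring A] [StarRing A] (l : List A) :
    star l.prod = ((l.map star).reverse).prod := by
  induction l with
  | nil => simp
  | cons a t ih =>
    simp only [List.prod_cons, star_mul, List.map_cons, List.reverse_cons, List.prod_append,
      List.prod_cons, List.prod_nil, mul_one, ih]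

section Main2
variable {A : Type*} [Ring A] [Algebra ℂ A] [StarRing A] [StarModule ℂ A] {ι : Type*}
variable (φ : A →ₗ[ℂ] ℂ) (κ : ∀ n, MultilinearMap ℂ (fun _ : Fin n => A) ℂ)
variable (Alg : ι → StarSubalgebra ℂ A)

lemma phi_two_words (hφ1 : φ 1 = 1) (hκ : MomentCumulant φ κ)
    (hfree : FreeIndepCumulant (fun i' => (Alg i' : Set A)) κ) :
    ∀ (N : ℕ) (P Q : List (A × ι)), P.length + Q.length ≤ N → P ≠ [] → Q ≠ [] →
    (∀ p ∈ P, p.1 ∈ Alg p.2) → (∀ p ∈ P, φ p.1 = 0) →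
    P.Chain' (fun p q => p.2 ≠ q.2) →
    (∀ p ∈ Q, p.1 ∈ Alg p.2) → (∀ p ∈ Q, φ p.1 = 0) →
    Q.Chain' (fun p q => p.2 ≠ q.2) →
    P.map Prod.snd ≠ (Q.map Prod.snd).reverse →
    φ ((P.map Prod.fst).prod * (Q.map Prod.fst).prod) = 0 := by
  intro N
  induction N with
  | zero =>
    intro P Q hlen hP hQ
    exfalso
    have := List.length_pos_iff.mpr hP
    omega
  | succ N ih =>
    intro P Q hlen hPne hQne hPmem hPcent hPch hQmem hQcent hQch hshape
    rcases List.eq_nil_or_concat' P with rfl | ⟨P', p, rfl⟩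
    · exact absurd rfl hPne
    obtain ⟨q, Q', rfl⟩ := List.exists_cons_of_ne_nil hQne
    -- junction elements p (last of P) and q (head of Q)
    have hpP : p ∈ P' ++ [p] := by simp
    have hqQ : q ∈ q :: Q' := by simp
    have hPch' : P'.Chain' (fun p q => p.2 ≠ q.2) :=
      (List.isChain_append.mp hPch).1
    have hQch' : Q'.Chain' (fun p q => p.2 ≠ q.2) := hQch.tail
    have hPjunc : ∀ x ∈ P'.getLast?, x.2 ≠ p.2 := by
      intro x hx
      exact (List.isChain_append.mp hPch).2.2 x hx p rfl
    have hQjunc : ∀ y ∈ Q'.head?, q.2 ≠ y.2 :=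
      (List.isChain_cons.mp hQch).1
    by_cases hpq : p.2 = q.2
    · -- merge the two middle letters
      set x : A := p.1 * q.1 with hx
      have hxmem : x ∈ Alg p.2 := by
        apply mul_mem (hPmem p hpP)
        rw [hpq]; exact hQmem q hqQ
      have hcmem : x - φ x • (1 : A) ∈ Alg p.2 :=
        sub_mem hxmem (SMulMemClass.smul_mem _ (one_mem _))
      have hccent : φ (x - φ x • (1 : A)) = 0 := by
        rw [map_sub, map_smul, hφ1, smul_eq_mul, mul_one, sub_self]
      -- the middle word
      set M : List (A × ι) := P' ++ ((x - φ x • (1 : A), p.2) :: Q') with hM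
      have hMne : M ≠ [] := by
        simp [hM]
      have hMmem : ∀ r ∈ M, r.1 ∈ Alg r.2 := by
        intro r hr
        rw [hM, List.mem_append, List.mem_cons] at hr
        rcases hr with hr | hr | hr
        · exact hPmem r (by simp [hr])
        · subst hr; exact hcmem
        · exact hQmem r (by simp [hr])
      have hMcent : ∀ r ∈ M, φ r.1 = 0 := by
        intro r hr
        rw [hM, List.mem_append, List.mem_cons] at hr
        rcases hr with hr | hr | hr
        · exact hPcent r (by simp [hr])
        · subst hr; exact hccent
        · exact hQcent r (by simp [hr])
      have hMch : M.Chain' (fun p q => p.2 ≠ q.2) := by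
        rw [hM, List.Chain', List.isChain_append]
        refine ⟨hPch', ?_, ?_⟩
        · rw [List.isChain_cons]
          refine ⟨?_, hQch'⟩
          intro y hy
          show p.2 ≠ y.2
          rw [hpq]
          exact hQjunc y hy
        · intro xx hxx y hy
          rw [List.head?_cons, Option.mem_some_iff] at hy
          subst hy
          exact hPjunc xx hxx
      have hMzero : φ ((M.map Prod.fst).prod) = 0 :=
        phi_word φ κ Alg hκ hfree M hMne hMmem hMcent hMch
      -- algebraic decomposition
      have hsplit : (((P' ++ [p]).map Prod.fst).prod * ((q :: Q').map Prod.fst).prod)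
          = (M.map Prod.fst).prod + φ x • ((P'.map Prod.fst).prod * (Q'.map Prod.fst).prod) := by
        rw [hM]
        simp only [List.map_append, List.map_cons, List.prod_append, List.prod_cons,
          List.map_nil, List.prod_nil, mul_one]
        rw [sub_mul, smul_mul_assoc, one_mul, mul_sub, mul_smul_comm, sub_add_cancel, hx,
          ← mul_assoc, ← mul_assoc, mul_assoc (List.map Prod.fst P').prod p.1 q.1]
      rw [hsplit, map_add, map_smul, hMzero, zero_add, smul_eq_mul]
      by_cases hP' : P' = []
      · by_cases hQ' : Q' = []
        · exfalso
          apply hshape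
          subst hP' hQ'
          simp [hpq]
        · subst hP'
          simp only [List.map_nil, List.prod_nil, one_mul]
          rw [phi_word φ κ Alg hκ hfree Q' hQ'
            (fun r hr => hQmem r (by simp [hr]))
            (fun r hr => hQcent r (by simp [hr])) hQch', mul_zero]
      · by_cases hQ' : Q' = []
        · subst hQ'
          simp only [List.map_nil, List.prod_nil, mul_one]
          rw [phi_word φ κ Alg hκ hfree P' hP'
            (fun r hr => hPmem r (by simp [hr]))
            (fun r hr => hPcent r (by simp [hr])) hPch', mul_zero]
        · have hshape' : P'.map Prod.snd ≠ (Q'.map Prod.snd).reverse := by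
            intro hcon
            apply hshape
            simp only [List.map_append, List.map_cons, List.reverse_cons]
            rw [hcon, hpq]
            simp
          have hlen' : P'.length + Q'.length ≤ N := by
            simp only [List.length_append, List.length_cons, List.length_singleton] at hlen ⊢
            omega
          rw [ih P' Q' hlen' hP' hQ'
            (fun r hr => hPmem r (by simp [hr]))
            (fun r hr => hPcent r (by simp [hr])) hPch'
            (fun r hr => hQmem r (by simp [hr]))
            (fun r hr => hQcent r (by simp [hr])) hQch' hshape', mul_zero]
    · -- distinct junction: whole word is alternating
      have hzero : φ (((P' ++ [p]) ++ (q :: Q')).map Prod.fst).prod = 0 := by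
        apply phi_word φ κ Alg hκ hfree
        · simp
        · intro r hr
          rw [List.mem_append] at hr
          rcases hr with hr | hr
          · exact hPmem r hr
          · exact hQmem r hr
        · intro r hr
          rw [List.mem_append] at hr
          rcases hr with hr | hr
          · exact hPcent r hr
          · exact hQcent r hr
        · rw [List.Chain', List.isChain_append]
          refine ⟨hPch, hQch, ?_⟩
          intro xx hxx y hy
          rw [List.getLast?_concat, Option.mem_some_iff] at hxx
          subst hxx
          rw [List.head?_cons, Option.mem_some_iff] at hy
          subst hy
          exact hpq
      rw [List.map_append, List.prod_append] at hzero
      exact hzero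

end Main2

/-- **Vanishing of `κ_2(a*, b)` for words of different shapes (Lemma 2, first part).**
Let `(A, φ)` be a `*`-probability space with free cumulants `κ`, and let `(Alg i)` be
unital `*`-subalgebras that are freely independent in the cumulant sense. Let
`a = a_1 ⋯ a_k` and `b = b_1 ⋯ b_l` be alternating words of centered elements,
`a_u ∈ Alg (i u)`, `b_v ∈ Alg (j v)`. If it is not the case that `k = l` and
`i u = j u` for all `u`, then `κ_2(a*, b) = 0`. -/
theorem kappa_two_star_word_ne_shape_eq_zero
    {A : Type*} [Ring A] [Algebra ℂ A] [StarRing A] [StarModule ℂ A] {ι : Type*}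
    (φ : A →ₗ[ℂ] ℂ) (hφ1 : φ 1 = 1)
    (hpos : ∀ x : A, 0 ≤ φ (star x * x))
    (κ : ∀ n, MultilinearMap ℂ (fun _ : Fin n => A) ℂ)
    (hκ : MomentCumulant φ κ)
    (Alg : ι → StarSubalgebra ℂ A)
    (hfree : FreeIndepCumulant (fun i' => (Alg i' : Set A)) κ)
    (k l : ℕ) (hk : 0 < k) (hl : 0 < l)
    (a : Fin k → A) (i : Fin k → ι) (b : Fin l → A) (j : Fin l → ι)
    (hamem : ∀ u, a u ∈ Alg (i u)) (hacent : ∀ u, φ (a u) = 0)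
    (haalt : ∀ u u' : Fin k, (u : ℕ) + 1 = (u' : ℕ) → i u ≠ i u')
    (hbmem : ∀ v, b v ∈ Alg (j v)) (hbcent : ∀ v, φ (b v) = 0)
    (hbalt : ∀ v v' : Fin l, (v : ℕ) + 1 = (v' : ℕ) → j v ≠ j v')
    (hne : ¬ ∃ h : k = l, ∀ u : Fin k, i u = j (Fin.cast h u)) :
    κ 2 ![star (List.ofFn a).prod, (List.ofFn b).prod] = 0 := by
  have hb0 : φ (List.ofFn b).prod = 0 := phi_alt φ κ Alg hκ hfree hl b j hbmem hbcent hbalt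
  rw [kappa_two φ κ hκ, hb0, mul_zero, sub_zero]
  set P : List (A × ι) := (List.ofFn (fun u => (star (a u), i u))).reverse with hP
  set Q : List (A × ι) := List.ofFn (fun v => (b v, j v)) with hQ
  have hPfst : (P.map Prod.fst).prod = star (List.ofFn a).prod := by
    rw [star_list_prod, hP, List.map_reverse, List.map_ofFn, List.map_ofFn]
    rfl
  have hQfst : Q.map Prod.fst = List.ofFn b := by rw [hQ, List.map_ofFn]; rfl
  rw [← hPfst, ← hQfst]
  apply phi_two_words φ κ Alg hφ1 hκ hfree (k + l) P Q
  · simp [hP, hQ]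
  · simp only [hP, ne_eq, List.reverse_eq_nil_iff, List.ofFn_eq_nil_iff]
    omega
  · simp only [hQ, ne_eq, List.ofFn_eq_nil_iff]
    omega
  · intro r hr
    rw [hP, List.mem_reverse, List.mem_ofFn] at hr
    obtain ⟨u, rfl⟩ := hr
    exact star_mem (hamem u)
  · intro r hr
    rw [hP, List.mem_reverse, List.mem_ofFn] at hr
    obtain ⟨u, rfl⟩ := hr
    show φ (star (a u)) = 0
    rw [phi_star_eq φ hφ1 hpos, hacent, map_zero]
  · rw [hP, List.Chain', List.isChain_reverse, List.isChain_iff_getElem]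
    intro m hm
    simp only [List.getElem_ofFn]
    intro hcon
    exact haalt _ _ rfl hcon.symm
  · intro r hr
    rw [hQ, List.mem_ofFn] at hr
    obtain ⟨v, rfl⟩ := hr
    exact hbmem v
  · intro r hr
    rw [hQ, List.mem_ofFn] at hr
    obtain ⟨v, rfl⟩ := hr
    exact hbcent v
  · rw [hQ, List.Chain', List.isChain_iff_getElem]
    intro m hm
    simp only [List.getElem_ofFn]
    exact hbalt _ _ rfl
  · intro hcon
    apply hne
    rw [hP, hQ, List.map_reverse, List.map_ofFn, List.map_ofFn] at hcon
    have hcon' : List.ofFn (fun u => i u) = List.ofFn (fun v => j v) := by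
      apply List.reverse_injective
      exact hcon
    have hkl : k = l := by
      have := congrArg List.length hcon'
      simpa using this
    subst hkl
    have := List.ofFn_injective hcon'
    exact ⟨rfl, fun u => congrFun this u⟩
end

section
/- Let (A, φ) be a *-probability space, let k, r ≥ 1, and let a_{s,u} ∈ A for 1 ≤ s ≤ r and 1 ≤ u ≤ k. Then the r × r complex matrix M with entries M_{st} = ∏_{u=1}^{k} ( φ(a_{s,u}* a_{t,u}) − φ(a_{s,u}*) φ(a_{t,u}) ) is positive semidefinite, i.e. for every x ∈ ℂ^r, Σ_{s,t} conj(x_s) x_t M_{st} is a nonnegative real number. -/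
open scoped BigOperators ComplexOrder


section aux
variable {A : Type*} [Ring A] [Algebra ℂ A] [StarRing A] [StarModule ℂ A]

lemma herm_aux (φ : A →ₗ[ℂ] ℂ) (hpos : ∀ x : A, 0 ≤ φ (star x * x)) (p q : A) :
    φ (star q * p) = (starRingEnd ℂ) (φ (star p * q)) := by
  have him : ∀ c : A, (φ (star c * c)).im = 0 := fun c => by
    have := hpos c; rw [Complex.le_def] at this; simpa using this.2.symm
  have h1 := him (p + q)
  have h2 := him (p + Complex.I • q)
  simp only [star_add, star_smul, add_mul, mul_add, map_add, map_smul,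
    smul_mul_assoc, mul_smul_comm, smul_smul, Complex.add_im, Complex.smul_im,
    Complex.star_def, Complex.conj_I, smul_eq_mul, Complex.mul_im, Complex.mul_re,
    Complex.neg_re, Complex.neg_im, Complex.I_re, Complex.I_im, him p, him q,
    him] at h1 h2
  rw [Complex.ext_iff]
  constructor <;> simp <;> linarith

lemma gram_form (φ : A →ₗ[ℂ] ℂ) (hpos : ∀ x : A, 0 ≤ φ (star x * x))
    {r : ℕ} (b : Fin r → A) (c : Fin r → ℂ) :
    0 ≤ ∑ s : Fin r, ∑ t : Fin r,
        (starRingEnd ℂ) (c s) * c t * φ (star (b s) * b t) := by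
  have key : φ (star (∑ s, c s • b s) * (∑ t, c t • b t)) =
      ∑ s : Fin r, ∑ t : Fin r,
        (starRingEnd ℂ) (c s) * c t * φ (star (b s) * b t) := by
    rw [star_sum, Finset.sum_mul_sum]
    simp only [star_smul, smul_mul_assoc, mul_smul_comm, smul_smul, map_sum,
      map_smul, Complex.star_def, smul_eq_mul]
    exact Finset.sum_congr rfl fun s _ => Finset.sum_congr rfl fun t _ => by ring
  rw [← key]; exact hpos _

lemma gram_hadamard (φ : A →ₗ[ℂ] ℂ) (hpos : ∀ x : A, 0 ≤ φ (star x * x)) :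
    ∀ (k : ℕ) {r : ℕ} (b : Fin r → Fin k → A) (x : Fin r → ℂ),
    0 ≤ ∑ s : Fin r, ∑ t : Fin r,
        (starRingEnd ℂ) (x s) * x t * ∏ u : Fin k, φ (star (b s u) * b t u) := by
  intro k
  induction k with
  | zero =>
    intro r b x
    simp only [Finset.univ_eq_empty, Finset.prod_empty, mul_one]
    have : ∑ s : Fin r, ∑ t : Fin r, (starRingEnd ℂ) (x s) * x t
        = star (∑ s, x s) * (∑ s, x s) := by
      rw [star_sum, Finset.sum_mul_sum]; rfl
    rw [this]; exact star_mul_self_nonneg _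
  | succ k ih =>
    intro r b x
    set Q : Matrix (Fin r) (Fin r) ℂ := Matrix.of fun s t =>
      ∏ u : Fin k, φ (star (b s u.succ) * b t u.succ) with hQ
    have hQpsd : Q.PosSemidef := by
      constructor
      · ext s t
        simp only [Matrix.conjTranspose_apply, hQ, Matrix.of_apply, star_prod,
          Complex.star_def]
        exact Finset.prod_congr rfl fun u _ => (herm_aux φ hpos _ _).symm
      · intro y
        have := ih (fun s u => b s u.succ) y
        simp only [dotProduct, Matrix.mulVec, dotProduct, hQ,
          Matrix.of_apply, Pi.star_apply, Complex.star_def, Finset.mul_sum,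
          Finsupp.sum_fintype, map_zero, zero_mul, mul_zero, Finset.sum_const_zero,
          implies_true]
        convert this using 2 with s
        apply Finset.sum_congr rfl; intro t _; ring
    obtain ⟨B, hB⟩ : ∃ B : Matrix (Fin r) (Fin r) ℂ, Q = B.conjTranspose * B := by
      open scoped MatrixOrder in
      obtain ⟨B, hB⟩ := CStarAlgebra.nonneg_iff_eq_star_mul_self.mp hQpsd.nonneg
      exact ⟨B, hB⟩
    have hQentry : ∀ s t : Fin r, (∏ u : Fin k, φ (star (b s u.succ) * b t u.succ))
        = ∑ m : Fin r, (starRingEnd ℂ) (B m s) * B m t := by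
      intro s t
      have : Q s t = (B.conjTranspose * B) s t := by rw [hB]
      simpa [Matrix.mul_apply, Matrix.conjTranspose_apply, Complex.star_def, hQ]
        using this
    have expand : ∑ s : Fin r, ∑ t : Fin r,
        (starRingEnd ℂ) (x s) * x t * ∏ u : Fin (k+1), φ (star (b s u) * b t u)
        = ∑ s : Fin r, ∑ t : Fin r, ∑ m : Fin r,
            (starRingEnd ℂ) (x s * B m s) * (x t * B m t)
              * φ (star (b s 0) * b t 0) := by
      apply Finset.sum_congr rfl; intro s _
      apply Finset.sum_congr rfl; intro t _
      rw [Fin.prod_univ_succ, hQentry s t, Finset.mul_sum, Finset.mul_sum]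
      apply Finset.sum_congr rfl; intro m _
      simp only [map_mul]; ring
    have swap : ∑ s : Fin r, ∑ t : Fin r, ∑ m : Fin r,
            (starRingEnd ℂ) (x s * B m s) * (x t * B m t)
              * φ (star (b s 0) * b t 0)
        = ∑ m : Fin r, ∑ s : Fin r, ∑ t : Fin r,
            (starRingEnd ℂ) (x s * B m s) * (x t * B m t)
              * φ (star (b s 0) * b t 0) := by
      rw [show (∑ s : Fin r, ∑ t : Fin r, ∑ m : Fin r,
            (starRingEnd ℂ) (x s * B m s) * (x t * B m t)
              * φ (star (b s 0) * b t 0))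
          = ∑ s : Fin r, ∑ m : Fin r, ∑ t : Fin r,
            (starRingEnd ℂ) (x s * B m s) * (x t * B m t)
              * φ (star (b s 0) * b t 0) from
        Finset.sum_congr rfl fun s _ => Finset.sum_comm]
      exact Finset.sum_comm
    rw [expand, swap]
    apply Finset.sum_nonneg; intro m _
    exact gram_form φ hpos (fun s => b s 0) (fun s => x s * B m s)
end aux

/-- **Schur–Hadamard products of covariance matrices are positive semidefinite.**
Let `(A, φ)` be a `*`-probability space, `k, r ≥ 1`, and `a_{s,u} ∈ A` for
`1 ≤ s ≤ r`, `1 ≤ u ≤ k`. Then the matrix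
`M_{st} = ∏_{u=1}^k (φ(a_{s,u}* a_{t,u}) − φ(a_{s,u}*) φ(a_{t,u}))` is positive
semidefinite: for every `x ∈ ℂ^r`, `Σ_{s,t} conj(x_s) x_t M_{st}` is a nonnegative
real number. -/
theorem hadamard_covariance_matrix_posSemidef
    {A : Type*} [Ring A] [Algebra ℂ A] [StarRing A] [StarModule ℂ A]
    (φ : A →ₗ[ℂ] ℂ) (hφ1 : φ 1 = 1)
    (hpos : ∀ x : A, 0 ≤ φ (star x * x))
    (k r : ℕ) (hk : 0 < k) (hr : 0 < r)
    (a : Fin r → Fin k → A) (x : Fin r → ℂ) :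
    0 ≤ ∑ s : Fin r, ∑ t : Fin r,
        (starRingEnd ℂ) (x s) * x t *
          ∏ u : Fin k,
            (φ (star (a s u) * a t u) - φ (star (a s u)) * φ (a t u)) := by
  set b : Fin r → Fin k → A := fun s u => a s u - (φ (a s u)) • 1 with hb
  have entry : ∀ (s t : Fin r) (u : Fin k),
      φ (star (b s u) * b t u)
        = φ (star (a s u) * a t u) - φ (star (a s u)) * φ (a t u) := by
    intro s t u
    simp only [hb, star_sub, star_smul, star_one, sub_mul, mul_sub,
      smul_mul_assoc, mul_smul_comm, smul_smul, one_mul, mul_one, map_sub,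
      map_smul, hφ1, smul_eq_mul, Complex.star_def]
    ring
  have key := gram_hadamard φ hpos k b x
  have heq : ∑ s : Fin r, ∑ t : Fin r,
      (starRingEnd ℂ) (x s) * x t * ∏ u : Fin k, φ (star (b s u) * b t u)
      = ∑ s : Fin r, ∑ t : Fin r,
        (starRingEnd ℂ) (x s) * x t *
          ∏ u : Fin k,
            (φ (star (a s u) * a t u) - φ (star (a s u)) * φ (a t u)) :=
    Finset.sum_congr rfl fun s _ => Finset.sum_congr rfl fun t _ => by
      rw [Finset.prod_congr rfl fun u _ => entry s t u]
  rwa [heq] at key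
end

section
/- Let (A, φ) be a non-commutative probability space. Then there exists a unique family of multilinear functionals κ_n : A^n → ℂ, n ≥ 1, such that for all n ≥ 1 and all a_1, …, a_n ∈ A, φ(a_1 ⋯ a_n) = Σ_{π ∈ NC(n)} κ_π[a_1, …, a_n], where κ_π denotes the multiplicative extension of the family (κ_n). -/
open scoped BigOperators ComplexOrder

section Aux

variable {A : Type*} [Ring A] [Algebra ℂ A]

lemma partCum_update_key (κ : ∀ n, MultilinearMap ℂ (fun _ : Fin n => A) ℂ)
    {n : ℕ} (π : Finpartition (Finset.univ : Finset (Fin n)))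
    (a : Fin n → A) (i : Fin n) :
    ∃ (c : ℂ) (m : ℕ) (b : Fin m → A) (j₀ : Fin m),
      ∀ y : A, partCum κ π (Function.update a i y) = κ m (Function.update b j₀ y) * c := by
  obtain ⟨V₀, hV₀, hi⟩ := π.exists_mem (Finset.mem_univ i)
  set L := V₀.sort (· ≤ ·) with hLdef
  have hiL : i ∈ L := (Finset.mem_sort _).mpr hi
  obtain ⟨j₀, hj₀⟩ := List.get_of_mem hiL
  refine ⟨∏ V ∈ π.parts.erase V₀,
      κ (V.sort (· ≤ ·)).length (fun j => a ((V.sort (· ≤ ·)).get j)),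
    L.length, (fun j => a (L.get j)), j₀, fun y => ?_⟩
  rw [partCum, ← Finset.mul_prod_erase _ _ hV₀]
  congr 1
  · congr 1
    funext j
    rcases eq_or_ne j j₀ with rfl | hj
    · rw [hj₀, Function.update_self, Function.update_self]
    · have hne : L.get j ≠ i := by
        rw [← hj₀]
        intro h
        exact hj ((V₀.sort_nodup (· ≤ ·)).get_inj_iff.mp h)
      rw [Function.update_of_ne hne, Function.update_of_ne hj]
  · refine Finset.prod_congr rfl fun V hV => ?_
    congr 1
    funext j
    have hmem : (V.sort (· ≤ ·)).get j ∈ V :=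
      (Finset.mem_sort _).mp (List.get_mem _ _)
    have hVne : V ≠ V₀ := (Finset.mem_erase.mp hV).1
    have hVp : V ∈ π.parts := (Finset.mem_erase.mp hV).2
    have hne : (V.sort (· ≤ ·)).get j ≠ i := fun h => hVne
      (π.eq_of_mem_parts hVp hV₀ (h ▸ hmem) hi)
    rw [Function.update_of_ne hne]

noncomputable def blockMap (κ : ∀ n, MultilinearMap ℂ (fun _ : Fin n => A) ℂ)
    {n : ℕ} (π : Finpartition (Finset.univ : Finset (Fin n))) :
    MultilinearMap ℂ (fun _ : Fin n => A) ℂ where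
  toFun := partCum κ π
  map_update_add' := by
    intro inst a i x y
    have h : inst = instDecidableEqFin n := Subsingleton.elim _ _
    subst h
    obtain ⟨c, m, b, j₀, hc⟩ := partCum_update_key κ π a i
    rw [hc, hc, hc, (κ m).map_update_add, add_mul]
  map_update_smul' := by
    intro inst a i r x
    have h : inst = instDecidableEqFin n := Subsingleton.elim _ _
    subst h
    obtain ⟨c, m, b, j₀, hc⟩ := partCum_update_key κ π a i
    rw [hc, hc, (κ m).map_update_smul, smul_mul_assoc]

@[simp] lemma blockMap_apply (κ : ∀ n, MultilinearMap ℂ (fun _ : Fin n => A) ℂ)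
    {n : ℕ} (π : Finpartition (Finset.univ : Finset (Fin n))) (a : Fin n → A) :
    blockMap κ π a = partCum κ π a := rfl

end Aux

section Aux2

variable {A : Type*} [Ring A] [Algebra ℂ A]

lemma isNonCrossing_top {n : ℕ} : IsNonCrossing (⊤ : Finpartition (Finset.univ : Finset (Fin n))) := by
  intro p q r s _ _ _ B hB C hC _ _ _ _
  exact Finpartition.parts_top_subsingleton _ hB hC

lemma parts_top_eq {n : ℕ} (hn : 0 < n) :
    (⊤ : Finpartition (Finset.univ : Finset (Fin n))).parts = {Finset.univ} := by
  have hne : (Finset.univ : Finset (Fin n)) ≠ ⊥ := by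
    have : Nonempty (Fin n) := ⟨⟨0, hn⟩⟩
    simpa using Finset.univ_nonempty.ne_empty
  rcases Finset.subset_singleton_iff.mp
      (Finpartition.parts_top_subset (Finset.univ : Finset (Fin n))) with h | h
  · exact absurd h (Finset.nonempty_iff_ne_empty.mp
      (Finpartition.parts_nonempty _ hne))
  · exact h

lemma eq_top_of_univ_mem {n : ℕ} {π : Finpartition (Finset.univ : Finset (Fin n))}
    (h : Finset.univ ∈ π.parts) : π = ⊤ := by
  refine le_antisymm le_top ?_
  intro b hb
  have hb' : b = Finset.univ := Finset.mem_singleton.mp (Finpartition.parts_top_subset _ hb)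
  exact ⟨Finset.univ, h, hb' ▸ le_rfl⟩

lemma card_lt_of_ne_top {n : ℕ} {π : Finpartition (Finset.univ : Finset (Fin n))}
    (hπ : π ≠ ⊤) {V : Finset (Fin n)} (hV : V ∈ π.parts) : V.card < n := by
  refine lt_of_le_of_ne (by simpa using Finset.card_le_univ V) fun h => hπ ?_
  have : V = Finset.univ := Finset.eq_univ_of_card V (by simpa using h)
  exact eq_top_of_univ_mem (this ▸ hV)

lemma κ_arity_cast {m n : ℕ} (h : m = n) (κ : ∀ m, MultilinearMap ℂ (fun _ : Fin m => A) ℂ)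
    (b : Fin m → A) (a : Fin n → A) (hb : ∀ j : Fin m, b j = a (Fin.cast h j)) :
    κ m b = κ n a := by
  subst h
  exact congrArg _ (funext hb)

lemma κ_cast {n : ℕ} (κ : ∀ m, MultilinearMap ℂ (fun _ : Fin m => A) ℂ)
    (L : List (Fin n)) (hL : L = List.finRange n) (a : Fin n → A) :
    κ L.length (fun j => a (L.get j)) = κ n a := by
  subst hL
  refine κ_arity_cast (List.length_finRange (n := n)) κ _ a fun j => ?_
  congr 1
  apply Fin.ext
  show ((List.finRange n).get j : ℕ) = (j : ℕ)
  obtain ⟨jv, hj⟩ := j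
  rw [List.get_finRange]
  rfl

end Aux2

section Aux3

variable {A : Type*} [Ring A] [Algebra ℂ A]

lemma sort_univ_eq (n : ℕ) :
    (Finset.univ : Finset (Fin n)).sort (· ≤ ·) = List.finRange n := by
  refine List.Perm.eq_of_pairwise' (Finset.pairwise_sort _ _)
    (List.pairwise_le_finRange n) ?_
  refine (List.perm_ext_iff_of_nodup (Finset.sort_nodup _ _) (List.nodup_finRange n)).mpr
    fun a => ?_
  simp [Finset.mem_sort, List.mem_finRange]

lemma partCum_top {n : ℕ} (hn : 0 < n) (κ : ∀ m, MultilinearMap ℂ (fun _ : Fin m => A) ℂ)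
    (a : Fin n → A) : partCum κ ⊤ a = κ n a := by
  rw [partCum, parts_top_eq hn, Finset.prod_singleton]
  exact κ_cast κ _ (sort_univ_eq n) a

lemma partCum_congr {n : ℕ} (κ₁ κ₂ : ∀ m, MultilinearMap ℂ (fun _ : Fin m => A) ℂ)
    (π : Finpartition (Finset.univ : Finset (Fin n)))
    (h : ∀ V ∈ π.parts, κ₁ V.card = κ₂ V.card) (a : Fin n → A) :
    partCum κ₁ π a = partCum κ₂ π a := by
  refine Finset.prod_congr rfl fun V hV => ?_
  have hlen : (V.sort (· ≤ ·)).length = V.card := Finset.length_sort _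
  have h' : κ₁ (V.sort (· ≤ ·)).length = κ₂ (V.sort (· ≤ ·)).length := by
    rw [hlen] at *; exact h V hV
  rw [h']

end Aux3

open Classical in
noncomputable def freeCum {A : Type*} [Ring A] [Algebra ℂ A] (φ : A →ₗ[ℂ] ℂ) :
    (n : ℕ) → MultilinearMap ℂ (fun _ : Fin n => A) ℂ
  | n =>
    φ.compMultilinearMap (MultilinearMap.mkPiAlgebraFin ℂ n A) -
      ∑ π ∈ Finset.univ.filter
          (fun π : Finpartition (Finset.univ : Finset (Fin n)) => IsNonCrossing π ∧ π ≠ ⊤),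
        blockMap (fun m => if h : m < n then freeCum φ m else 0) π
  termination_by n => n
  decreasing_by exact h

section Main

variable {A : Type*} [Ring A] [Algebra ℂ A]

open Classical in
lemma sum_nc_split {n : ℕ} (hn : 0 < n)
    (κ : ∀ m, MultilinearMap ℂ (fun _ : Fin m => A) ℂ) (a : Fin n → A) :
    ∑ π ∈ Finset.univ.filter
        (fun π : Finpartition (Finset.univ : Finset (Fin n)) => IsNonCrossing π),
      partCum κ π a =
    κ n a + ∑ π ∈ Finset.univ.filter
        (fun π : Finpartition (Finset.univ : Finset (Fin n)) => IsNonCrossing π ∧ π ≠ ⊤),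
      partCum κ π a := by
  have htop : (⊤ : Finpartition (Finset.univ : Finset (Fin n))) ∈
      Finset.univ.filter (fun π => IsNonCrossing π) := by
    simp [isNonCrossing_top]
  rw [← Finset.add_sum_erase _ _ htop, partCum_top hn]
  congr 1
  apply Finset.sum_congr _ fun _ _ => rfl
  ext π
  simp only [Finset.mem_erase, Finset.mem_filter, Finset.mem_univ, true_and]
  tauto

open Classical in
lemma freeCum_eq {n : ℕ} (φ : A →ₗ[ℂ] ℂ) (a : Fin n → A) :
    freeCum φ n a = φ (List.ofFn a).prod -
      ∑ π ∈ Finset.univ.filter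
          (fun π : Finpartition (Finset.univ : Finset (Fin n)) => IsNonCrossing π ∧ π ≠ ⊤),
        partCum (freeCum φ) π a := by
  rw [freeCum]
  rw [MultilinearMap.sub_apply, MultilinearMap.sum_apply,
    LinearMap.compMultilinearMap_apply, MultilinearMap.mkPiAlgebraFin_apply]
  congr 1
  refine Finset.sum_congr rfl fun π hπ => ?_
  rw [blockMap_apply]
  refine partCum_congr _ _ π (fun V hV => ?_) a
  have hπ' : π ≠ ⊤ := (Finset.mem_filter.mp hπ).2.2
  rw [dif_pos (card_lt_of_ne_top hπ' hV)]

lemma momentCumulant_freeCum (φ : A →ₗ[ℂ] ℂ) : MomentCumulant φ (freeCum φ) := by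
  intro n hn a
  rw [sum_nc_split hn, freeCum_eq φ a]
  ring

end Main

open Classical in
lemma freeCum_unique {A : Type*} [Ring A] [Algebra ℂ A] (φ : A →ₗ[ℂ] ℂ)
    (κ' : ∀ n, MultilinearMap ℂ (fun _ : Fin n => A) ℂ)
    (hκ' : MomentCumulant φ κ') : ∀ n, 0 < n → κ' n = freeCum φ n := by
  intro n
  induction n using Nat.strong_induction_on with
  | _ n ih =>
    intro hn
    ext a
    have h1 := hκ' n hn a
    have h2 := momentCumulant_freeCum φ n hn a
    rw [sum_nc_split hn] at h1 h2
    have hS : ∑ π ∈ Finset.univ.filter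
          (fun π : Finpartition (Finset.univ : Finset (Fin n)) => IsNonCrossing π ∧ π ≠ ⊤),
        partCum κ' π a =
      ∑ π ∈ Finset.univ.filter
          (fun π : Finpartition (Finset.univ : Finset (Fin n)) => IsNonCrossing π ∧ π ≠ ⊤),
        partCum (freeCum φ) π a := by
      refine Finset.sum_congr rfl fun π hπ => ?_
      have hπ' : π ≠ ⊤ := by
        classical
        have := Finset.mem_filter.mp hπ
        exact this.2.2
      refine partCum_congr _ _ π (fun V hV => ?_) a
      exact ih V.card (card_lt_of_ne_top hπ' hV)
        (Finset.card_pos.mpr (π.nonempty_of_mem_parts hV))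
    have := h1.symm.trans h2
    rw [hS] at this
    exact add_right_cancel this

/-- **Existence and uniqueness of free cumulants.**
Let `(A, φ)` be a non-commutative probability space. There exists a family of
multilinear functionals `κ n : A^n → ℂ` satisfying the moment–cumulant relation
`φ(a_1 ⋯ a_n) = Σ_{π ∈ NC(n)} κ_π[a_1, …, a_n]` for all `n ≥ 1`, and it is unique:
any other such family agrees with it in every arity `n ≥ 1`. -/
theorem exists_unique_free_cumulants
    {A : Type*} [Ring A] [Algebra ℂ A]
    (φ : A →ₗ[ℂ] ℂ) (hφ1 : φ 1 = 1) :
    ∃ κ : ∀ n, MultilinearMap ℂ (fun _ : Fin n => A) ℂ,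
      MomentCumulant φ κ ∧
      ∀ κ' : ∀ n, MultilinearMap ℂ (fun _ : Fin n => A) ℂ,
        MomentCumulant φ κ' → ∀ n, 0 < n → κ' n = κ n :=
  ⟨freeCum φ, momentCumulant_freeCum φ, fun κ' h => freeCum_unique φ κ' h⟩
end
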